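/- Let G = (V,E) be a graph with V = {1,…,n−1} (n ≥ 2), let t > 0 be real, and define the n×n matrix Γ by: Γ_{ij} = 1/n² if {i,j} ∈ E and Γ_{ij} = 0 if i ≠ j, i,j < n and {i,j} ∉ E; Γ_{ii} = 1/n for i < n; Γ_{in} = Γ_{ni} = 1/n² for i < n; and Γ_{nn} = t/n². Let ρ = (3n² − n + 4t)/(2n²). If there exist a finite set 𝒞 of cliques of G and weights w_C ≥ 0 with Σ_{C ∈ 𝒞} w_C ≤ t and Σ_{C ∈ 𝒞, v ∈ C} w_C = 1 for every v ∈ V, then there exists a nonnegative function p : {0,1}^n → ℝ≥0 with Γ = Σ_{x ∈ {0,1}^n} p(x)·x xᵀ and Σ_x p(x) ≤ ρ. -/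

import Mathlib

open Matrix BigOperators

/-- The real vector associated to a boolean vector. -/
def boolVec {n : ℕ} (s : Fin n → Bool) : Fin n → ℝ := fun i => if s i then 1 else 0

/-- The rank-one matrix `x xᵀ`. -/
def rankOne {n : ℕ} (x : Fin n → ℝ) : Matrix (Fin n) (Fin n) ℝ :=
  Matrix.of fun i j => x i * x j

open scoped Classical in
/-- The `n×n` matrix (with `n = m+1`, vertices of `G` being the indices `< m`) of the
reduction from Fractional Clique Cover: `Γᵢⱼ = 1/n²` on edges (and `0` on non-edges),
`Γᵢᵢ = 1/n` for `i < m`, `Γᵢₙ = Γₙᵢ = 1/n²`, and `Γₙₙ = t/n²`. -/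
noncomputable def gammaFCC (m : ℕ) (G : SimpleGraph (Fin m)) (t : ℝ) :
    Matrix (Fin (m+1)) (Fin (m+1)) ℝ :=
  Matrix.of fun i j =>
    if hi : (i : ℕ) < m then
      if hj : (j : ℕ) < m then
        if i = j then 1 / ((m : ℝ) + 1)
        else if G.Adj ⟨(i : ℕ), hi⟩ ⟨(j : ℕ), hj⟩ then 1 / ((m : ℝ) + 1) ^ 2 else 0
      else 1 / ((m : ℝ) + 1) ^ 2
    else if (j : ℕ) < m then 1 / ((m : ℝ) + 1) ^ 2 else t / ((m : ℝ) + 1) ^ 2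

namespace FCCProof
variable {m : ℕ}

def chi {n : ℕ} (S : Finset (Fin n)) : Fin n → Bool := fun i => decide (i ∈ S)

lemma rankOne_chi {n : ℕ} (S : Finset (Fin n)) (i j : Fin n) :
    rankOne (boolVec (chi S)) i j = (if i ∈ S then (1:ℝ) else 0) * (if j ∈ S then 1 else 0) := by
  simp [rankOne, boolVec, chi]

lemma sum_delta_mul {α : Type*} [Fintype α] [DecidableEq α] {ι : Type*} (s : Finset ι)
    (coef : ι → ℝ) (bb : ι → α) (g : α → ℝ) :
    (∑ x : α, (∑ k ∈ s, if x = bb k then coef k else 0) * g x) = ∑ k ∈ s, coef k * g (bb k) := by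
  have h : ∀ x : α, (∑ k ∈ s, if x = bb k then coef k else 0) * g x
      = ∑ k ∈ s, (if x = bb k then coef k * g x else 0) := by
    intro x
    rw [Finset.sum_mul]
    exact Finset.sum_congr rfl fun k _ => by rw [ite_mul, zero_mul]
  simp only [h]
  rw [Finset.sum_comm]
  refine Finset.sum_congr rfl fun k _ => ?_
  simp

lemma sum_delta_mul_single {α : Type*} [Fintype α] [DecidableEq α] (b : α) (c : ℝ) (g : α → ℝ) :
    (∑ x : α, (if x = b then c else 0) * g x) = c * g b := by
  simp [ite_mul]

lemma sum_delta {α : Type*} [Fintype α] [DecidableEq α] {ι : Type*} (s : Finset ι)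
    (coef : ι → ℝ) (bb : ι → α) :
    (∑ x : α, (∑ k ∈ s, if x = bb k then coef k else 0)) = ∑ k ∈ s, coef k := by
  rw [Finset.sum_comm]
  simp

def cSet (C : Finset (Fin m)) : Finset (Fin (m+1)) := insert (Fin.last m) (C.image Fin.castSucc)
def pSet (i j : Fin m) : Finset (Fin (m+1)) := {i.castSucc, j.castSucc}
def sSet (i : Fin m) : Finset (Fin (m+1)) := {i.castSucc}

@[simp] lemma castSucc_ne_last' (i : Fin m) : (i.castSucc : Fin (m+1)) ≠ Fin.last m :=
  (Fin.castSucc_lt_last i).ne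

@[simp] lemma mem_cSet_castSucc (C : Finset (Fin m)) (i : Fin m) :
    i.castSucc ∈ cSet C ↔ i ∈ C := by
  simp [cSet, Fin.castSucc_inj]

@[simp] lemma mem_cSet_last (C : Finset (Fin m)) : Fin.last m ∈ cSet C :=
  Finset.mem_insert_self _ _

@[simp] lemma mem_pSet_castSucc (i a b : Fin m) : i.castSucc ∈ pSet a b ↔ i = a ∨ i = b := by
  simp [pSet, Fin.castSucc_inj]

@[simp] lemma not_mem_pSet_last (a b : Fin m) : Fin.last m ∉ pSet a b := by
  simp [pSet, Fin.ext_iff]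
  omega

@[simp] lemma mem_sSet_castSucc (i a : Fin m) : i.castSucc ∈ sSet a ↔ i = a := by
  simp [sSet, Fin.castSucc_inj]

@[simp] lemma not_mem_sSet_last (a : Fin m) : Fin.last m ∉ sSet a := by
  simp [sSet, Fin.ext_iff]; omega

open scoped Classical in
lemma gamma_cc (G : SimpleGraph (Fin m)) (t : ℝ) (i j : Fin m) :
    gammaFCC m G t i.castSucc j.castSucc
      = if i = j then 1 / ((m : ℝ) + 1)
        else if G.Adj i j then 1 / ((m : ℝ) + 1) ^ 2 else 0 := by
  simp [gammaFCC, i.isLt, j.isLt, Fin.castSucc_inj]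

lemma gamma_cl (G : SimpleGraph (Fin m)) (t : ℝ) (i : Fin m) :
    gammaFCC m G t i.castSucc (Fin.last m) = 1 / ((m : ℝ) + 1) ^ 2 := by
  simp [gammaFCC, i.isLt]

lemma gamma_lc (G : SimpleGraph (Fin m)) (t : ℝ) (j : Fin m) :
    gammaFCC m G t (Fin.last m) j.castSucc = 1 / ((m : ℝ) + 1) ^ 2 := by
  simp [gammaFCC, j.isLt]

lemma gamma_ll (G : SimpleGraph (Fin m)) (t : ℝ) :
    gammaFCC m G t (Fin.last m) (Fin.last m) = t / ((m : ℝ) + 1) ^ 2 := by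
  simp [gammaFCC]

noncomputable def fccA (𝒞 : Finset (Finset (Fin m))) (w : Finset (Fin m) → ℝ) (i j : Fin m) : ℝ := by
  classical
  exact ∑ C ∈ 𝒞.filter (fun C => i ∈ C ∧ j ∈ C), w C

variable {𝒞 : Finset (Finset (Fin m))} {w : Finset (Fin m) → ℝ} {G : SimpleGraph (Fin m)}

lemma fccA_def (i j : Fin m) [DecidablePred fun C : Finset (Fin m) => i ∈ C ∧ j ∈ C] :
    fccA 𝒞 w i j = ∑ C ∈ 𝒞.filter (fun C => i ∈ C ∧ j ∈ C), w C := by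
  unfold fccA; congr

lemma fccA_nonneg (hw : ∀ C, 0 ≤ w C) (i j : Fin m) : 0 ≤ fccA 𝒞 w i j := by
  classical
  rw [fccA_def]
  exact Finset.sum_nonneg fun C _ => hw C

lemma fccA_symm (i j : Fin m) : fccA 𝒞 w i j = fccA 𝒞 w j i := by
  classical
  rw [fccA_def, fccA_def]
  apply Finset.sum_congr _ (fun _ _ => rfl)
  apply Finset.filter_congr
  intro C _
  simp [and_comm]

lemma fccA_le_one (hw : ∀ C, 0 ≤ w C)
    (hcov : ∀ v : Fin m, (∑ C ∈ 𝒞.filter (fun C => v ∈ C), w C) = 1)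
    (i j : Fin m) : fccA 𝒞 w i j ≤ 1 := by
  classical
  rw [fccA_def, ← hcov i]
  apply Finset.sum_le_sum_of_subset_of_nonneg
  · intro C hC
    rw [Finset.mem_filter] at hC ⊢
    exact ⟨hC.1, hC.2.1⟩
  · exact fun C _ _ => hw C

lemma fccA_diag (hcov : ∀ v : Fin m, (∑ C ∈ 𝒞.filter (fun C => v ∈ C), w C) = 1)
    (i : Fin m) : fccA 𝒞 w i i = 1 := by
  classical
  rw [fccA_def, ← hcov i]
  apply Finset.sum_congr _ (fun _ _ => rfl)
  apply Finset.filter_congr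
  intro C _; simp

lemma fccA_eq_zero (hclique : ∀ C ∈ 𝒞, ∀ i ∈ C, ∀ j ∈ C, i ≠ j → G.Adj i j)
    {i j : Fin m} (hij : i ≠ j) (hadj : ¬ G.Adj i j) : fccA 𝒞 w i j = 0 := by
  classical
  rw [fccA_def]
  apply Finset.sum_eq_zero
  intro C hC
  rw [Finset.mem_filter] at hC
  exact absurd (hclique C hC.1 i hC.2.1 j hC.2.2 hij) hadj

open scoped Classical in
lemma collapse1 (f : Fin m → ℝ) (i₀ : Fin m) :
    (∑ i' : Fin m, if i₀ = i' then f i' else 0) = f i₀ := by simp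

open scoped Classical in
lemma collapse2 (f : Fin m → Fin m → ℝ) (i₀ j₀ : Fin m) :
    (∑ i' : Fin m, ∑ j' : Fin m, if i₀ = i' ∧ j₀ = j' then f i' j' else 0) = f i₀ j₀ := by
  have h1 : ∀ i' : Fin m, (∑ j' : Fin m, if i₀ = i' ∧ j₀ = j' then f i' j' else 0)
      = if i₀ = i' then f i' j₀ else 0 := by
    intro i'
    by_cases h : i₀ = i' <;> simp [h]
  simp only [h1]
  simp

lemma pair_ind_diag {α : Type*} [DecidableEq α] (i₀ i' j' : α) (c : ℝ) :
    c * ((if i₀ = i' ∨ i₀ = j' then (1:ℝ) else 0) * if i₀ = i' ∨ i₀ = j' then 1 else 0)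
      = ((if i₀ = i' then c else 0) + if i₀ = j' then c else 0)
        - if i₀ = i' ∧ i₀ = j' then c else 0 := by
  by_cases h1 : i₀ = i' <;> by_cases h2 : i₀ = j' <;> simp_all

lemma pair_ind_offdiag {α : Type*} [DecidableEq α] {i₀ j₀ : α} (hij : i₀ ≠ j₀) (i' j' : α) (c : ℝ) :
    c * ((if i₀ = i' ∨ i₀ = j' then (1:ℝ) else 0) * if j₀ = i' ∨ j₀ = j' then 1 else 0)
      = (if i₀ = i' ∧ j₀ = j' then c else 0) + (if j₀ = i' ∧ i₀ = j' then c else 0) := by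
  by_cases h1 : i₀ = i' <;> by_cases h2 : i₀ = j' <;> by_cases h3 : j₀ = i' <;>
    by_cases h4 : j₀ = j' <;> simp_all

lemma single_ind_offdiag {α : Type*} [DecidableEq α] {i₀ j₀ : α} (hij : i₀ ≠ j₀) (x : α) (c : ℝ) :
    c * ((if i₀ = x then (1:ℝ) else 0) * if j₀ = x then 1 else 0) = 0 := by
  by_cases h1 : i₀ = x <;> by_cases h2 : j₀ = x <;> simp_all

end FCCProof

open FCCProof in
/-- If `G` admits a fractional clique cover of value at most `t`, then `Γ` has a conic
decomposition into rank-one boolean matrices of total weight at most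
`ρ = (3n² − n + 4t)/(2n²)` (here `n = m+1`). -/
theorem gammaFCC_relaxedRank_of_fractionalCliqueCover (m : ℕ) (hm : 1 ≤ m)
    (G : SimpleGraph (Fin m)) (t : ℝ) (ht : 0 < t)
    (𝒞 : Finset (Finset (Fin m))) (w : Finset (Fin m) → ℝ)
    (hclique : ∀ C ∈ 𝒞, ∀ i ∈ C, ∀ j ∈ C, i ≠ j → G.Adj i j)
    (hw : ∀ C, 0 ≤ w C)
    (hwt : (∑ C ∈ 𝒞, w C) ≤ t)
    (hcov : ∀ v : Fin m, (∑ C ∈ 𝒞.filter (fun C => v ∈ C), w C) = 1) :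
    ∃ p : (Fin (m+1) → Bool) → ℝ, (∀ s, 0 ≤ p s) ∧
      gammaFCC m G t = ∑ s : Fin (m+1) → Bool, p s • rankOne (boolVec s) ∧
      (∑ s : Fin (m+1) → Bool, p s)
        ≤ (3 * ((m : ℝ) + 1) ^ 2 - ((m : ℝ) + 1) + 4 * t) / (2 * ((m : ℝ) + 1) ^ 2) := by
  classical
  have hN0 : (0:ℝ) < (m:ℝ) + 1 := by positivity
  set N : ℝ := (m:ℝ) + 1 with hNdef
  set a : Fin m → Fin m → ℝ := fccA 𝒞 w with hadef
  set q : Fin m → Fin m → ℝ :=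
    fun i j => (if G.Adj i j then 1 - a i j else 0) / (2 * N ^ 2) with hqdef
  set d : Fin m → ℝ :=
    fun i => ∑ j ∈ Finset.univ.filter (fun j => G.Adj i j), (1 - a i j) with hddef
  set cs : Fin m → ℝ := fun i => ((m : ℝ) - d i) / N ^ 2 with hcsdef
  set W : ℝ := ∑ C ∈ 𝒞, w C with hWdef
  have ha0 : ∀ i j, 0 ≤ a i j := fccA_nonneg hw
  have ha1 : ∀ i j, a i j ≤ 1 := fccA_le_one hw hcov
  have hasymm : ∀ i j, a i j = a j i := fun i j => fccA_symm i j
  have hadiag : ∀ i, a i i = 1 := fccA_diag hcov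
  have hq0 : ∀ i j, 0 ≤ q i j := by
    intro i j
    apply div_nonneg _ (by positivity)
    split_ifs with h
    · linarith [ha1 i j]
    · exact le_rfl
  have hqsymm : ∀ i j, q i j = q j i := by
    intro i j
    simp only [hqdef]
    rw [hasymm i j]
    congr 1
    by_cases h : G.Adj i j
    · rw [if_pos h, if_pos h.symm]
    · rw [if_neg h, if_neg (fun h' => h h'.symm)]
  have hqdiag : ∀ i, q i i = 0 := by
    intro i
    simp [hqdef, G.irrefl]
  have hd0 : ∀ i, 0 ≤ d i := by
    intro i
    apply Finset.sum_nonneg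
    intro j _
    linarith [ha1 i j]
  have hdm : ∀ i, d i ≤ (m:ℝ) := by
    intro i
    calc d i ≤ ∑ j ∈ Finset.univ.filter (fun j => G.Adj i j), (1:ℝ) := by
          apply Finset.sum_le_sum
          intro j _
          linarith [ha0 i j]
      _ = (Finset.univ.filter (fun j => G.Adj i j)).card := by simp
      _ ≤ (Finset.univ : Finset (Fin m)).card := by
          exact_mod_cast Finset.card_le_card (Finset.filter_subset _ _)
      _ = (m:ℝ) := by simp
  have hcs0 : ∀ i, 0 ≤ cs i := by
    intro i
    apply div_nonneg _ (by positivity)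
    linarith [hdm i]
  have hqsum : ∀ i, (∑ j : Fin m, q i j) = d i / (2 * N ^ 2) := by
    intro i
    rw [hddef]
    simp only [hqdef]
    rw [← Finset.sum_div]
    congr 1
    rw [Finset.sum_filter]
  refine ⟨fun s =>
    (∑ C ∈ 𝒞, if s = chi (cSet C) then w C / N ^ 2 else 0)
    + (∑ z : Fin m × Fin m, if s = chi (pSet z.1 z.2) then q z.1 z.2 else 0)
    + (∑ i : Fin m, if s = chi (sSet i) then cs i else 0)
    + (if s = chi ({Fin.last m} : Finset (Fin (m+1))) then (t - W) / N ^ 2 else 0),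
    ?_, ?_, ?_⟩
  · -- nonnegativity
    intro s
    have h1 : (0:ℝ) ≤ ∑ C ∈ 𝒞, if s = chi (cSet C) then w C / N ^ 2 else 0 :=
      Finset.sum_nonneg fun C _ => by
        split_ifs
        · exact div_nonneg (hw C) (by positivity)
        · exact le_rfl
    have h2 : (0:ℝ) ≤ ∑ z : Fin m × Fin m, if s = chi (pSet z.1 z.2) then q z.1 z.2 else 0 :=
      Finset.sum_nonneg fun z _ => by
        split_ifs
        · exact hq0 _ _
        · exact le_rfl
    have h3 : (0:ℝ) ≤ ∑ i : Fin m, if s = chi (sSet i) then cs i else 0 :=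
      Finset.sum_nonneg fun i _ => by
        split_ifs
        · exact hcs0 _
        · exact le_rfl
    have h4 : (0:ℝ) ≤ if s = chi ({Fin.last m} : Finset (Fin (m+1))) then (t - W) / N ^ 2 else 0 := by
      split_ifs
      · exact div_nonneg (by linarith) (by positivity)
      · exact le_rfl
    linarith
  · -- matrix identity
    ext i j
    rw [Matrix.sum_apply]
    simp only [Matrix.smul_apply, smul_eq_mul]
    simp only [add_mul, Finset.sum_add_distrib]
    rw [sum_delta_mul 𝒞 (fun C => w C / N ^ 2) (fun C => chi (cSet C))
          (fun s => rankOne (boolVec s) i j),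
        sum_delta_mul Finset.univ (fun z : Fin m × Fin m => q z.1 z.2)
          (fun z => chi (pSet z.1 z.2)) (fun s => rankOne (boolVec s) i j),
        sum_delta_mul Finset.univ cs (fun i' => chi (sSet i'))
          (fun s => rankOne (boolVec s) i j),
        sum_delta_mul_single (chi ({Fin.last m} : Finset (Fin (m+1)))) ((t - W) / N ^ 2)
          (fun s => rankOne (boolVec s) i j)]
    simp only [rankOne_chi]
    rcases Fin.eq_castSucc_or_eq_last i with ⟨i₀, rfl⟩ | rfl <;>
      rcases Fin.eq_castSucc_or_eq_last j with ⟨j₀, rfl⟩ | rfl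
    · -- castSucc, castSucc
      rw [gamma_cc, ← hNdef]
      have E1 : (∑ x ∈ 𝒞, w x / N ^ 2 *
          ((if i₀.castSucc ∈ cSet x then (1:ℝ) else 0) * if j₀.castSucc ∈ cSet x then 1 else 0))
          = a i₀ j₀ / N ^ 2 := by
        have h : a i₀ j₀ = ∑ C ∈ 𝒞, if i₀ ∈ C ∧ j₀ ∈ C then w C else 0 := by
          rw [hadef, fccA_def, Finset.sum_filter]
        rw [h, Finset.sum_div]
        refine Finset.sum_congr rfl fun C _ => ?_
        simp only [mem_cSet_castSucc]
        by_cases h1 : i₀ ∈ C <;> by_cases h2 : j₀ ∈ C <;> simp [h1, h2]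
      have E3 : (∑ x : Fin m, cs x *
          ((if i₀.castSucc ∈ sSet x then (1:ℝ) else 0) * if j₀.castSucc ∈ sSet x then 1 else 0))
          = if i₀ = j₀ then cs i₀ else 0 := by
        simp only [mem_sSet_castSucc]
        by_cases hij : i₀ = j₀
        · subst hij
          rw [if_pos rfl]
          have pw : ∀ x : Fin m, cs x * ((if i₀ = x then (1:ℝ) else 0) * if i₀ = x then 1 else 0)
              = if i₀ = x then cs x else 0 := by
            intro x; by_cases h : i₀ = x <;> simp [h]
          simp only [pw]
          exact collapse1 cs i₀
        · rw [if_neg hij]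
          exact Finset.sum_eq_zero fun x _ => single_ind_offdiag hij x (cs x)
      have E2 : (∑ x : Fin m × Fin m, q x.1 x.2 *
          ((if i₀.castSucc ∈ pSet x.1 x.2 then (1:ℝ) else 0)
            * if j₀.castSucc ∈ pSet x.1 x.2 then 1 else 0))
          = if i₀ = j₀ then d i₀ / N ^ 2 else 2 * q i₀ j₀ := by
        simp only [mem_pSet_castSucc]
        rw [Fintype.sum_prod_type]
        by_cases hij : i₀ = j₀
        · subst hij
          rw [if_pos rfl]
          have pw : ∀ i' j' : Fin m, q i' j' *
              ((if i₀ = i' ∨ i₀ = j' then (1:ℝ) else 0) * if i₀ = i' ∨ i₀ = j' then 1 else 0)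
              = ((if i₀ = i' then q i' j' else 0) + (if i₀ = j' then q i' j' else 0))
                - (if i₀ = i' ∧ i₀ = j' then q i' j' else 0) :=
            fun i' j' => pair_ind_diag i₀ i' j' (q i' j')
          simp only [pw]
          have inner : ∀ i' : Fin m,
              (∑ j' : Fin m, (((if i₀ = i' then q i' j' else 0)
                  + (if i₀ = j' then q i' j' else 0))
                - (if i₀ = i' ∧ i₀ = j' then q i' j' else 0)))
              = ((∑ j' : Fin m, if i₀ = i' then q i' j' else 0)
                  + (∑ j' : Fin m, if i₀ = j' then q i' j' else 0))
                - (∑ j' : Fin m, if i₀ = i' ∧ i₀ = j' then q i' j' else 0) := by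
            intro i'
            rw [Finset.sum_sub_distrib, Finset.sum_add_distrib]
          simp only [inner]
          rw [Finset.sum_sub_distrib, Finset.sum_add_distrib, collapse2 q i₀ i₀]
          have hA : ∀ i' : Fin m,
              (∑ j' : Fin m, if i₀ = i' then q i' j' else 0)
              = if i₀ = i' then d i₀ / (2 * N ^ 2) else 0 := by
            intro i'
            by_cases h : i₀ = i'
            · subst h; simp [hqsum i₀]
            · simp [h]
          have hB : ∀ i' : Fin m,
              (∑ j' : Fin m, if i₀ = j' then q i' j' else 0) = q i' i₀ :=
            fun i' => collapse1 (fun j' => q i' j') i₀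
          rw [Finset.sum_congr rfl fun i' _ => hA i',
              Finset.sum_congr rfl fun i' _ => hB i']
          rw [collapse1 (fun _ => d i₀ / (2 * N ^ 2)) i₀]
          have hC : (∑ i' : Fin m, q i' i₀) = d i₀ / (2 * N ^ 2) := by
            rw [Finset.sum_congr rfl fun i' _ => hqsymm i' i₀, hqsum i₀]
          rw [hC, hqdiag i₀, sub_zero, ← add_div]
          rw [show d i₀ + d i₀ = 2 * d i₀ by ring]
          exact mul_div_mul_left (d i₀) (N ^ 2) two_ne_zero
        · rw [if_neg hij]
          have pw : ∀ i' j' : Fin m, q i' j' *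
              ((if i₀ = i' ∨ i₀ = j' then (1:ℝ) else 0) * if j₀ = i' ∨ j₀ = j' then 1 else 0)
              = (if i₀ = i' ∧ j₀ = j' then q i' j' else 0)
                + (if j₀ = i' ∧ i₀ = j' then q i' j' else 0) :=
            fun i' j' => pair_ind_offdiag hij i' j' (q i' j')
          simp only [pw]
          simp only [Finset.sum_add_distrib]
          rw [collapse2 q i₀ j₀, collapse2 q j₀ i₀, hqsymm j₀ i₀]
          ring
      rw [E1, E2, E3]
      have E4 : ((if i₀.castSucc ∈ ({Fin.last m} : Finset (Fin (m+1))) then (1:ℝ) else 0)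
          * if j₀.castSucc ∈ ({Fin.last m} : Finset (Fin (m+1))) then 1 else 0) = 0 := by
        simp
      rw [E4, mul_zero, add_zero]
      by_cases hij : i₀ = j₀
      · subst hij
        rw [if_pos rfl, if_pos rfl, if_pos rfl, hadiag i₀, hcsdef]
        simp only
        rw [hNdef]
        have : (m:ℝ) + 1 ≠ 0 := by positivity
        field_simp
        ring
      · rw [if_neg hij, if_neg hij, if_neg hij, add_zero]
        by_cases hadj : G.Adj i₀ j₀
        · rw [if_pos hadj, hqdef]
          simp only [if_pos hadj]
          have hN2 : N ^ 2 ≠ 0 := by positivity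
          field_simp
          ring
        · rw [if_neg hadj]
          have ha' : a i₀ j₀ = 0 := by
            rw [hadef]; exact fccA_eq_zero hclique hij hadj
          rw [ha', hqdef]
          simp [hadj]
    · -- castSucc, last
      rw [gamma_cl, ← hNdef]
      have E1 : (∑ x ∈ 𝒞, w x / N ^ 2 *
          ((if i₀.castSucc ∈ cSet x then (1:ℝ) else 0) * if Fin.last m ∈ cSet x then 1 else 0))
          = 1 / N ^ 2 := by
        rw [show (1:ℝ) / N ^ 2 = (∑ C ∈ 𝒞.filter (fun C => i₀ ∈ C), w C) / N ^ 2 by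
          rw [hcov i₀]]
        rw [Finset.sum_filter, Finset.sum_div]
        refine Finset.sum_congr rfl fun C _ => ?_
        simp only [mem_cSet_castSucc, mem_cSet_last]
        by_cases h1 : i₀ ∈ C <;> simp [h1]
      rw [E1]
      simp
    · -- last, castSucc
      rw [gamma_lc, ← hNdef]
      have E1 : (∑ x ∈ 𝒞, w x / N ^ 2 *
          ((if Fin.last m ∈ cSet x then (1:ℝ) else 0) * if j₀.castSucc ∈ cSet x then 1 else 0))
          = 1 / N ^ 2 := by
        rw [show (1:ℝ) / N ^ 2 = (∑ C ∈ 𝒞.filter (fun C => j₀ ∈ C), w C) / N ^ 2 by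
          rw [hcov j₀]]
        rw [Finset.sum_filter, Finset.sum_div]
        refine Finset.sum_congr rfl fun C _ => ?_
        simp only [mem_cSet_castSucc, mem_cSet_last]
        by_cases h1 : j₀ ∈ C <;> simp [h1]
      rw [E1]
      simp
    · -- last, last
      rw [gamma_ll, ← hNdef]
      have E1 : (∑ x ∈ 𝒞, w x / N ^ 2 *
          ((if Fin.last m ∈ cSet x then (1:ℝ) else 0) * if Fin.last m ∈ cSet x then 1 else 0))
          = W / N ^ 2 := by
        rw [hWdef, Finset.sum_div]
        refine Finset.sum_congr rfl fun C _ => ?_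
        simp
      rw [E1]
      simp
      ring
  · -- total weight bound
    rw [Finset.sum_add_distrib, Finset.sum_add_distrib, Finset.sum_add_distrib]
    rw [sum_delta 𝒞 (fun C => w C / N ^ 2) (fun C => chi (cSet C)),
        sum_delta Finset.univ (fun z : Fin m × Fin m => q z.1 z.2) (fun z => chi (pSet z.1 z.2)),
        sum_delta Finset.univ cs (fun i => chi (sSet i)),
        Finset.sum_ite_eq' Finset.univ (chi ({Fin.last m} : Finset (Fin (m+1))))
          (fun _ => (t - W) / N ^ 2)]
    simp only [Finset.mem_univ, if_true]
    set S : ℝ := ∑ i : Fin m, d i with hSdef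
    have hS0 : 0 ≤ S := Finset.sum_nonneg fun i _ => hd0 i
    have e1 : (∑ C ∈ 𝒞, w C / N ^ 2) = W / N ^ 2 := by
      rw [← Finset.sum_div, ← hWdef]
    have e2 : (∑ z : Fin m × Fin m, q z.1 z.2) = S / (2 * N ^ 2) := by
      rw [Fintype.sum_prod_type]
      simp only [hqsum]
      rw [← Finset.sum_div, ← hSdef]
    have e3 : (∑ i : Fin m, cs i) = ((m:ℝ) * (m:ℝ) - S) / N ^ 2 := by
      simp only [hcsdef]
      rw [← Finset.sum_div]
      congr 1
      rw [Finset.sum_sub_distrib, ← hSdef]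
      simp [Finset.card_univ]
    rw [e1, e2, e3, ← sub_nonneg]
    have e4 : (3 * N ^ 2 - N + 4 * t) / (2 * N ^ 2)
        - (W / N ^ 2 + S / (2 * N ^ 2) + ((m:ℝ) * (m:ℝ) - S) / N ^ 2 + (t - W) / N ^ 2)
        = (3 * N ^ 2 - N + 2 * t + S - 2 * ((m:ℝ) * (m:ℝ))) / (2 * N ^ 2) := by
      field_simp
      ring
    rw [e4]
    apply div_nonneg _ (by positivity)
    have hm1 : (1:ℝ) ≤ (m:ℝ) := by exact_mod_cast hm
    rw [hNdef]
    nlinarith [hm1, ht, hS0]
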